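/- The function ψ(a, b) = a·Φ(−b) is strictly quasi-concave on (0, ∞) × ℝ; that is, for any distinct (a₀, b₀), (a₁, b₁) in (0, ∞) × ℝ and any λ ∈ (0,1), ψ(a₀ + λ(a₁−a₀), b₀ + λ(b₁−b₀)) > min{ψ(a₀, b₀), ψ(a₁, b₁)}. -/

import Mathlib

/-- The density of the standard normal distribution. -/
noncomputable def stdGaussianPDF (x : ℝ) : ℝ :=
  (Real.sqrt (2 * Real.pi))⁻¹ * Real.exp (-(x ^ 2) / 2)

/-- The cumulative distribution function of the standard normal distribution. -/
noncomputable def stdGaussianCDF (x : ℝ) : ℝ :=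
  ∫ t in Set.Iic x, stdGaussianPDF t

open Real MeasureTheory Set

lemma sgp_pos (x : ℝ) : 0 < stdGaussianPDF x := by
  have : (0:ℝ) < Real.sqrt (2 * Real.pi) := Real.sqrt_pos.2 (by positivity)
  exact mul_pos (inv_pos.2 this) (Real.exp_pos _)

lemma sgp_eq (x : ℝ) : stdGaussianPDF x
    = (Real.sqrt (2 * Real.pi))⁻¹ * Real.exp (-(1/2) * x ^ 2) := by
  unfold stdGaussianPDF; ring_nf

lemma sgp_integrable : Integrable stdGaussianPDF := by
  have h := integrable_exp_neg_mul_sq (b := (1/2 : ℝ)) (by norm_num)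
  have := h.const_mul (Real.sqrt (2 * Real.pi))⁻¹
  refine this.congr ?_
  filter_upwards with x
  rw [sgp_eq]

lemma sgp_mul_integrable : Integrable (fun x => x * stdGaussianPDF x) := by
  have h := integrable_mul_exp_neg_mul_sq (b := (1/2 : ℝ)) (by norm_num)
  have := h.const_mul (Real.sqrt (2 * Real.pi))⁻¹
  refine this.congr ?_
  filter_upwards with x
  rw [sgp_eq]
  ring

lemma sgp_continuous : Continuous stdGaussianPDF := by
  unfold stdGaussianPDF
  fun_prop

lemma sgp_hasDerivAt (x : ℝ) : HasDerivAt stdGaussianPDF (-x * stdGaussianPDF x) x := by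
  have h1 : HasDerivAt (fun t : ℝ => -(t ^ 2) / 2) (-x) x := by
    have h := (((hasDerivAt_pow 2 x).neg).div_const 2)
    refine h.congr_deriv ?_
    simp
    ring
  have h2 : HasDerivAt (fun t : ℝ => Real.exp (-(t ^ 2) / 2))
      (Real.exp (-(x ^ 2) / 2) * (-x)) x := (Real.hasDerivAt_exp _).comp x h1
  have := h2.const_mul (Real.sqrt (2 * Real.pi))⁻¹
  refine this.congr_deriv ?_
  unfold stdGaussianPDF
  ring

lemma sgp_tendsto_atBot : Filter.Tendsto stdGaussianPDF Filter.atBot (nhds 0) := by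
  have hmul : Filter.Tendsto (fun t : ℝ => t * t) Filter.atBot Filter.atTop :=
    Filter.Tendsto.atBot_mul_atBot₀ Filter.tendsto_id Filter.tendsto_id
  have h1 : Filter.Tendsto (fun t : ℝ => -(t ^ 2) / 2) Filter.atBot Filter.atBot := by
    have h := ((Filter.tendsto_neg_atTop_atBot.comp hmul).atBot_div_const
      (show (0:ℝ) < 2 by norm_num))
    exact h.congr (fun t => by simp [Function.comp]; ring)
  have h2 : Filter.Tendsto (fun t : ℝ => Real.exp (-(t ^ 2) / 2)) Filter.atBot (nhds 0) :=
    Real.tendsto_exp_atBot.comp h1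
  unfold stdGaussianPDF
  simpa only [stdGaussianPDF, mul_zero] using h2.const_mul (Real.sqrt (2 * Real.pi))⁻¹

lemma sgc_strictMono : StrictMono stdGaussianCDF := by
  intro x y hxy
  have hπ : IntegrableOn stdGaussianPDF (Iic x) := sgp_integrable.integrableOn
  have hπ' : IntegrableOn stdGaussianPDF (Iic y) := sgp_integrable.integrableOn
  have h := intervalIntegral.integral_Iic_sub_Iic (f := stdGaussianPDF) (μ := volume) hπ hπ'
  have hpos : 0 < ∫ t in x..y, stdGaussianPDF t :=
    intervalIntegral.intervalIntegral_pos_of_pos sgp_integrable.intervalIntegrable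
      (fun t => sgp_pos t) hxy
  have : stdGaussianCDF y - stdGaussianCDF x = ∫ t in x..y, stdGaussianPDF t := by
    unfold stdGaussianCDF; rw [h]
  linarith

lemma sgc_pos (x : ℝ) : 0 < stdGaussianCDF x := by
  have hπ : IntegrableOn stdGaussianPDF (Iic x) := sgp_integrable.integrableOn
  have hπ' : IntegrableOn stdGaussianPDF (Iic (x - 1)) := sgp_integrable.integrableOn
  have h := intervalIntegral.integral_Iic_sub_Iic (f := stdGaussianPDF) (μ := volume) hπ' hπ
  have hpos : 0 < ∫ t in (x-1)..x, stdGaussianPDF t :=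
    intervalIntegral.intervalIntegral_pos_of_pos sgp_integrable.intervalIntegrable
      (fun t => sgp_pos t) (by linarith)
  have hnn : 0 ≤ stdGaussianCDF (x - 1) := by
    unfold stdGaussianCDF
    exact setIntegral_nonneg measurableSet_Iic (fun t _ => (sgp_pos t).le)
  have : stdGaussianCDF x - stdGaussianCDF (x - 1) = ∫ t in (x-1)..x, stdGaussianPDF t := by
    unfold stdGaussianCDF; rw [h]
  linarith

lemma sgc_hasDerivAt (x : ℝ) : HasDerivAt stdGaussianCDF (stdGaussianPDF x) x := by
  have hI : ∀ y : ℝ, stdGaussianCDF y = stdGaussianCDF 0 + ∫ t in (0:ℝ)..y, stdGaussianPDF t := by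
    intro y
    have h := intervalIntegral.integral_Iic_sub_Iic (f := stdGaussianPDF) (μ := volume)
      (sgp_integrable.integrableOn (s := Iic 0)) (sgp_integrable.integrableOn (s := Iic y))
    unfold stdGaussianCDF
    rw [← h]; ring
  have h2 : HasDerivAt (fun y => ∫ t in (0:ℝ)..y, stdGaussianPDF t) (stdGaussianPDF x) x := by
    exact intervalIntegral.integral_hasDerivAt_right
      sgp_integrable.intervalIntegrable
      (sgp_continuous.stronglyMeasurable.stronglyMeasurableAtFilter)
      sgp_continuous.continuousAt
  have h3 := h2.const_add (stdGaussianCDF 0)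
  exact h3.congr_of_eventuallyEq (by filter_upwards with y; rw [hI y])

/-- Mills-type inequality : `x * Φ(x) + φ(x) ≥ 0`. -/
lemma mills (x : ℝ) : 0 ≤ x * stdGaussianCDF x + stdGaussianPDF x := by
  -- ∫_{Iic x} t φ(t) dt = -φ(x)
  have key : ∫ t in Iic x, t * stdGaussianPDF t = -stdGaussianPDF x := by
    have := integral_Iic_of_hasDerivAt_of_tendsto' (f := fun t => -stdGaussianPDF t)
      (f' := fun t => t * stdGaussianPDF t) (a := x) (m := 0)
      (fun t _ => ((sgp_hasDerivAt t).neg).congr_deriv (by ring))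
      (sgp_mul_integrable.integrableOn)
      (by simpa using sgp_tendsto_atBot.neg)
    simpa using this
  have hmono : ∫ t in Iic x, t * stdGaussianPDF t ≤ ∫ t in Iic x, x * stdGaussianPDF t := by
    apply setIntegral_mono_on sgp_mul_integrable.integrableOn
      ((sgp_integrable.const_mul x).integrableOn) measurableSet_Iic
    intro t ht
    exact mul_le_mul_of_nonneg_right ht (sgp_pos t).le
  have hc : ∫ t in Iic x, x * stdGaussianPDF t = x * stdGaussianCDF x := by
    rw [integral_const_mul]; rfl
  rw [key, hc] at hmono
  linarith

lemma hazard_antitone : Antitone (fun x => stdGaussianPDF x / stdGaussianCDF x) := by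
  have hd : ∀ x : ℝ, HasDerivAt (fun x => stdGaussianPDF x / stdGaussianCDF x)
      ((-x * stdGaussianPDF x * stdGaussianCDF x - stdGaussianPDF x * stdGaussianPDF x)
        / (stdGaussianCDF x) ^ 2) x := by
    intro x
    exact (sgp_hasDerivAt x).div (sgc_hasDerivAt x) (sgc_pos x).ne'
  apply antitone_of_deriv_nonpos
  · intro x; exact (hd x).differentiableAt
  · intro x
    rw [(hd x).deriv]
    apply div_nonpos_of_nonpos_of_nonneg _ (by positivity)
    have h := mills x
    have hφ := sgp_pos x
    nlinarith [sgp_pos x, mills x]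

lemma logCDF_concave : ConcaveOn ℝ univ (fun x => Real.log (stdGaussianCDF x)) := by
  have hd : ∀ x : ℝ, HasDerivAt (fun x => Real.log (stdGaussianCDF x))
      (stdGaussianPDF x / stdGaussianCDF x) x := by
    intro x
    exact (sgc_hasDerivAt x).log (sgc_pos x).ne'
  apply AntitoneOn.concaveOn_of_deriv convex_univ
  · exact fun x _ => ((hd x).continuousAt).continuousWithinAt
  · intro x _
    exact ((hd x).differentiableAt).differentiableWithinAt
  · intro x _ y _ hxy
    rw [(hd x).deriv, (hd y).deriv]
    exact hazard_antitone hxy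

/-- The function `ψ(a, b) = a·Φ(−b)` is strictly quasi-concave on `(0, ∞) × ℝ`. -/
theorem strictQuasiConcave_aPhiNeg (a₀ a₁ b₀ b₁ lam : ℝ) (ha₀ : 0 < a₀) (ha₁ : 0 < a₁)
    (hne : (a₀, b₀) ≠ (a₁, b₁)) (hlam : lam ∈ Set.Ioo (0 : ℝ) 1) :
    min (a₀ * stdGaussianCDF (-b₀)) (a₁ * stdGaussianCDF (-b₁)) <
      (a₀ + lam * (a₁ - a₀)) * stdGaussianCDF (-(b₀ + lam * (b₁ - b₀))) := by
  obtain ⟨hl0, hl1⟩ := hlam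
  set μ : ℝ := 1 - lam with hμ
  have hμ0 : 0 < μ := by simp [hμ]; linarith
  have hμsum : μ + lam = 1 := by simp [hμ]
  have haeq : a₀ + lam * (a₁ - a₀) = μ * a₀ + lam * a₁ := by simp [hμ]; ring
  have hbeq : -(b₀ + lam * (b₁ - b₀)) = μ * (-b₀) + lam * (-b₁) := by simp [hμ]; ring
  have hΦ₀ := sgc_pos (-b₀)
  have hΦ₁ := sgc_pos (-b₁)
  by_cases hab : a₀ = a₁
  · -- then b₀ ≠ b₁; use strict monotonicity of Φ
    have hbne : b₀ ≠ b₁ := by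
      intro h; exact hne (by rw [hab, h])
    subst hab
    have hmin : -(b₀ + lam * (b₁ - b₀)) > min (-b₀) (-b₁) := by
      rcases lt_or_gt_of_ne hbne with h | h
      · have : b₀ + lam * (b₁ - b₀) < b₁ := by nlinarith
        simp only [min_def]
        split_ifs with hc
        · linarith
        · linarith
      · have : b₀ + lam * (b₁ - b₀) < b₀ := by nlinarith
        simp only [min_def]
        split_ifs with hc
        · linarith
        · linarith
    have hΦ : min (stdGaussianCDF (-b₀)) (stdGaussianCDF (-b₁))
        < stdGaussianCDF (-(b₀ + lam * (b₁ - b₀))) := by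
      have := sgc_strictMono hmin
      calc min (stdGaussianCDF (-b₀)) (stdGaussianCDF (-b₁))
          ≤ stdGaussianCDF (min (-b₀) (-b₁)) := by
            rcases min_cases (-b₀) (-b₁) with ⟨h1, h2⟩ | ⟨h1, h2⟩ <;> rw [h1] <;>
              simp [min_le_iff, le_refl]
        _ < _ := this
    calc min (a₀ * stdGaussianCDF (-b₀)) (a₀ * stdGaussianCDF (-b₁))
        = a₀ * min (stdGaussianCDF (-b₀)) (stdGaussianCDF (-b₁)) := by
          rcases min_cases (stdGaussianCDF (-b₀)) (stdGaussianCDF (-b₁)) with ⟨h1,h2⟩|⟨h1,h2⟩ <;>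
            rw [h1] <;> simp [min_def] <;> intro h <;> nlinarith
      _ < a₀ * stdGaussianCDF (-(b₀ + lam * (b₁ - b₀))) :=
          mul_lt_mul_of_pos_left hΦ ha₀
      _ = (a₀ + lam * (a₀ - a₀)) * stdGaussianCDF (-(b₀ + lam * (b₁ - b₀))) := by ring
  · -- a₀ ≠ a₁ : use strict concavity of log + log-concavity of Φ
    have hloga : μ * Real.log a₀ + lam * Real.log a₁ < Real.log (μ * a₀ + lam * a₁) := by
      have := strictConcaveOn_log_Ioi.2 (mem_Ioi.mpr ha₀) (mem_Ioi.mpr ha₁) hab hμ0 hl0 hμsum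
      simpa [smul_eq_mul] using this
    have hlogΦ : μ * Real.log (stdGaussianCDF (-b₀)) + lam * Real.log (stdGaussianCDF (-b₁))
        ≤ Real.log (stdGaussianCDF (μ * (-b₀) + lam * (-b₁))) := by
      have := logCDF_concave.2 (mem_univ (-b₀)) (mem_univ (-b₁)) hμ0.le hl0.le hμsum
      simpa [smul_eq_mul] using this
    set m := min (a₀ * stdGaussianCDF (-b₀)) (a₁ * stdGaussianCDF (-b₁)) with hm
    have hm0 : 0 < m := lt_min (by positivity) (by positivity)
    have hpsil : 0 < (a₀ + lam * (a₁ - a₀)) * stdGaussianCDF (-(b₀ + lam * (b₁ - b₀))) := by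
      have : 0 < a₀ + lam * (a₁ - a₀) := by rw [haeq]; positivity
      exact mul_pos this (sgc_pos _)
    rw [← Real.exp_log hm0, ← Real.exp_log hpsil]
    apply Real.exp_lt_exp.mpr
    have hlogm : Real.log m ≤ μ * (Real.log a₀ + Real.log (stdGaussianCDF (-b₀)))
        + lam * (Real.log a₁ + Real.log (stdGaussianCDF (-b₁))) := by
      have h0 : Real.log m ≤ Real.log a₀ + Real.log (stdGaussianCDF (-b₀)) := by
        rw [← Real.log_mul ha₀.ne' hΦ₀.ne']
        exact Real.log_le_log hm0 (min_le_left _ _)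
      have h1 : Real.log m ≤ Real.log a₁ + Real.log (stdGaussianCDF (-b₁)) := by
        rw [← Real.log_mul ha₁.ne' hΦ₁.ne']
        exact Real.log_le_log hm0 (min_le_right _ _)
      have h2 := mul_le_mul_of_nonneg_left h0 hμ0.le
      have h3 := mul_le_mul_of_nonneg_left h1 hl0.le
      have h4 : μ * Real.log m + lam * Real.log m = Real.log m := by
        have : (μ + lam) * Real.log m = 1 * Real.log m := by rw [hμsum]
        linarith [this]
      linarith [h2, h3, h4]
    have hψ : Real.log ((a₀ + lam * (a₁ - a₀)) * stdGaussianCDF (-(b₀ + lam * (b₁ - b₀))))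
        = Real.log (μ * a₀ + lam * a₁)
          + Real.log (stdGaussianCDF (μ * (-b₀) + lam * (-b₁))) := by
      rw [haeq, hbeq, Real.log_mul (by positivity) (sgc_pos _).ne']
    rw [hψ]
    calc Real.log m ≤ μ * (Real.log a₀ + Real.log (stdGaussianCDF (-b₀)))
        + lam * (Real.log a₁ + Real.log (stdGaussianCDF (-b₁))) := hlogm
      _ = (μ * Real.log a₀ + lam * Real.log a₁)
          + (μ * Real.log (stdGaussianCDF (-b₀)) + lam * Real.log (stdGaussianCDF (-b₁))) := by
          ring
      _ < _ := by exact add_lt_add_of_lt_of_le hloga hlogΦ
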